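/- Let P : ℕ → (0,∞) satisfy 1/P(n) = 1/P(n-1) + (1 - q_n) for all n > t, where q_i = 1 - (1 + (B-1)η)/(B·i/2 - (B-1)(ρ + 1 - η)) with B ≥ 1, η ∈ [0,1], ρ ≥ 1, t ≥ 3ρ + 2, and 1/P(t) = 2H_t - 2 where H_t is the t-th harmonic number. Then 1/P(n) ≤ 2H_t - 2 + (2(1+(B-1)η)/B)·ln((Bn/2 - (B-1)(ρ+1-η))/(Bt/2 - (B-1)(ρ+1-η))). -/

import Mathlib

lemma stmt_10_aux (c B x : ℝ) (hc : 0 < c) (hB : 0 < B) (hx : 0 < x) (hy : 0 < x - B / 2) :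
    c / x ≤ (2 * c / B) * (Real.log x - Real.log (x - B / 2)) := by
  have hlog : Real.log ((x - B / 2) / x) ≤ (x - B / 2) / x - 1 :=
    Real.log_le_sub_one_of_pos (div_pos hy hx)
  rw [Real.log_div (ne_of_gt hy) (ne_of_gt hx)] at hlog
  have h1 : 1 - (x - B / 2) / x ≤ Real.log x - Real.log (x - B / 2) := by linarith
  have h2 : (2 * c / B) * (1 - (x - B / 2) / x) ≤
      (2 * c / B) * (Real.log x - Real.log (x - B / 2)) := by
    apply mul_le_mul_of_nonneg_left h1
    positivity
  have h3 : (2 * c / B) * (1 - (x - B / 2) / x) = c / x := by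
    field_simp
    ring
  linarith

theorem stmt_10 (B η ρ : ℝ) (hB : 1 ≤ B) (hη0 : 0 ≤ η) (hη1 : η ≤ 1) (hρ : 1 ≤ ρ)
    (t : ℕ) (ht : 3 * ρ + 2 ≤ (t : ℝ))
    (q : ℕ → ℝ)
    (hq : ∀ i : ℕ, q i = 1 - (1 + (B - 1) * η) / (B * i / 2 - (B - 1) * (ρ + 1 - η)))
    (P : ℕ → ℝ) (hPpos : ∀ n, 0 < P n)
    (hrec : ∀ n, t < n → 1 / P n = 1 / P (n - 1) + (1 - q n))
    (hbase : 1 / P t = 2 * (∑ i ∈ Finset.Icc 1 t, (1 : ℝ) / i) - 2) :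
    ∀ n : ℕ, t ≤ n →
      1 / P n ≤ 2 * (∑ i ∈ Finset.Icc 1 t, (1 : ℝ) / i) - 2 +
        (2 * (1 + (B - 1) * η) / B) *
          Real.log ((B * n / 2 - (B - 1) * (ρ + 1 - η)) /
            (B * t / 2 - (B - 1) * (ρ + 1 - η))) := by
  have hB0 : (0:ℝ) < B := by linarith
  have hc0 : (0:ℝ) < 1 + (B - 1) * η := by
    nlinarith [mul_nonneg (by linarith : (0:ℝ) ≤ B - 1) hη0]
  have hK : (0:ℝ) < B * t / 2 - (B - 1) * (ρ + 1 - η) := by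
    nlinarith [mul_nonneg (by linarith : (0:ℝ) ≤ B - 1) hη0,
      mul_nonneg (by linarith : (0:ℝ) ≤ B - 1) (by linarith : (0:ℝ) ≤ ρ),
      mul_nonneg hB0.le (by linarith : (0:ℝ) ≤ (t:ℝ) - (3*ρ+2))]
  have hf : ∀ m : ℕ, t ≤ m → (0:ℝ) < B * m / 2 - (B - 1) * (ρ + 1 - η) := by
    intro m hm
    have h1 : (t:ℝ) ≤ m := Nat.cast_le.2 hm
    nlinarith
  intro n hn
  induction n, hn using Nat.le_induction with
  | base =>
      rw [hbase, div_self (ne_of_gt hK), Real.log_one, mul_zero, add_zero]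
  | succ n hn ih =>
      have hy : (0:ℝ) < B * n / 2 - (B - 1) * (ρ + 1 - η) := hf n hn
      have hx : (0:ℝ) < B * ((n:ℝ)+1) / 2 - (B - 1) * (ρ + 1 - η) := by
        have := hf (n+1) (le_trans hn (Nat.le_succ n))
        push_cast at this; linarith
      have hrec' := hrec (n+1) (Nat.lt_succ_of_le hn)
      simp only [Nat.add_sub_cancel] at hrec'
      have hq' := hq (n+1)
      push_cast at hq'
      have hyx : B * (n:ℝ) / 2 - (B - 1) * (ρ + 1 - η) =
          (B * ((n:ℝ)+1) / 2 - (B - 1) * (ρ + 1 - η)) - B / 2 := by ring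
      have key := stmt_10_aux (1 + (B - 1) * η) B
        (B * ((n:ℝ)+1) / 2 - (B - 1) * (ρ + 1 - η)) hc0 hB0 hx (by rw [← hyx]; exact hy)
      rw [← hyx] at key
      have hstep : 1 - q (n+1) ≤ (2 * (1 + (B - 1) * η) / B) *
          (Real.log (B * ((n:ℝ)+1) / 2 - (B - 1) * (ρ + 1 - η)) -
           Real.log (B * (n:ℝ) / 2 - (B - 1) * (ρ + 1 - η))) := by
        rw [hq']; simpa using key
      have hlogn : Real.log ((B * (n:ℝ) / 2 - (B - 1) * (ρ + 1 - η)) /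
          (B * (t:ℝ) / 2 - (B - 1) * (ρ + 1 - η))) =
          Real.log (B * (n:ℝ) / 2 - (B - 1) * (ρ + 1 - η)) -
          Real.log (B * (t:ℝ) / 2 - (B - 1) * (ρ + 1 - η)) :=
        Real.log_div (ne_of_gt hy) (ne_of_gt hK)
      have hlogn1 : Real.log ((B * ((n:ℝ)+1) / 2 - (B - 1) * (ρ + 1 - η)) /
          (B * (t:ℝ) / 2 - (B - 1) * (ρ + 1 - η))) =
          Real.log (B * ((n:ℝ)+1) / 2 - (B - 1) * (ρ + 1 - η)) -
          Real.log (B * (t:ℝ) / 2 - (B - 1) * (ρ + 1 - η)) :=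
        Real.log_div (ne_of_gt hx) (ne_of_gt hK)
      rw [hlogn] at ih
      push_cast
      rw [hlogn1, hrec']
      linarith
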